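/- Let $X_1,X_2,Y_1,Y_2$ be Banach spaces, $A_1,A_2$ closed densely defined operators on $X_1,X_2$, and $B_1\in\mathcal{L}(Y_1,X_1)$, $B_2\in\mathcal{L}(Y_2,X_2)$, $C_1\in\mathcal{L}(X_1,Y_2)$, $C_2\in\mathcal{L}(X_2,Y_1)$. Define the full block operator $A$ on $X_1\times X_2$ by $A(x_1,x_2)=(A_1x_1+B_1C_2x_2,\ B_2C_1x_1+A_2x_2)$ with domain $\mathrm{Dom}(A_1)\times\mathrm{Dom}(A_2)$. If $\lambda\in\rho(A_1)\cap\rho(A_2)$ and $1\in\rho(C_2R(\lambda,A_2)B_2C_1R(\lambda,A_1)B_1)$, then $\lambda\in\rho(A)$ and, writing $D_\lambda=I-C_2R(\lambda,A_2)B_2C_1R(\lambda,A_1)B_1$ and $S_1(\lambda)^{-1}=R(\lambda,A_2)+R(\lambda,A_2)B_2C_1R(\lambda,A_1)B_1D_\lambda^{-1}C_2R(\lambda,A_2)$, the resolvent of $A$ equals the block matrix with entries $R(\lambda,A_1)+R(\lambda,A_1)B_1C_2S_1(\lambda)^{-1}B_2C_1R(\lambda,A_1)$, $R(\lambda,A_1)B_1C_2S_1(\lambda)^{-1}$,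 $S_1(\lambda)^{-1}B_2C_1R(\lambda,A_1)$, and $S_1(\lambda)^{-1}$. -/

import Mathlib

/-- `R` is the (bounded) resolvent of the (possibly unbounded) operator `T`,
defined on the domain `dom`, at the point `lam`. -/
def IsResolventOf {X : Type*} [NormedAddCommGroup X] [NormedSpace ℂ X]
    (dom : Submodule ℂ X) (T : X →ₗ[ℂ] X) (lam : ℂ) (R : X →L[ℂ] X) : Prop :=
  (∀ x : X, R x ∈ dom) ∧
  (∀ x : X, lam • R x - T (R x) = x) ∧
  (∀ x ∈ dom, R (lam • x - T x) = x)

theorem stmt_5 (X₁ X₂ Y₁ Y₂ : Type*)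
    [NormedAddCommGroup X₁] [NormedSpace ℂ X₁] [CompleteSpace X₁]
    [NormedAddCommGroup X₂] [NormedSpace ℂ X₂] [CompleteSpace X₂]
    [NormedAddCommGroup Y₁] [NormedSpace ℂ Y₁] [CompleteSpace Y₁]
    [NormedAddCommGroup Y₂] [NormedSpace ℂ Y₂] [CompleteSpace Y₂]
    (dom₁ : Submodule ℂ X₁) (dom₂ : Submodule ℂ X₂)
    (A₁ : X₁ →ₗ[ℂ] X₁) (A₂ : X₂ →ₗ[ℂ] X₂)
    (hdense₁ : Dense (dom₁ : Set X₁)) (hdense₂ : Dense (dom₂ : Set X₂))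
    (hclosed₁ : IsClosed {p : X₁ × X₁ | p.1 ∈ dom₁ ∧ A₁ p.1 = p.2})
    (hclosed₂ : IsClosed {p : X₂ × X₂ | p.1 ∈ dom₂ ∧ A₂ p.1 = p.2})
    (B₁ : Y₁ →L[ℂ] X₁) (B₂ : Y₂ →L[ℂ] X₂)
    (C₁ : X₁ →L[ℂ] Y₂) (C₂ : X₂ →L[ℂ] Y₁)
    (lam : ℂ) (R₁ : X₁ →L[ℂ] X₁) (R₂ : X₂ →L[ℂ] X₂)
    (hR₁ : IsResolventOf dom₁ A₁ lam R₁) (hR₂ : IsResolventOf dom₂ A₂ lam R₂)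
    -- `1 ∈ ρ(C₂ R(λ,A₂) B₂ C₁ R(λ,A₁) B₁)`, i.e. `I - D` is boundedly invertible
    (Dinv : Y₁ →L[ℂ] Y₁)
    (hDinv₁ : (1 - (C₂.comp (R₂.comp (B₂.comp (C₁.comp (R₁.comp B₁)))))) * Dinv = 1)
    (hDinv₂ : Dinv * (1 - (C₂.comp (R₂.comp (B₂.comp (C₁.comp (R₁.comp B₁)))))) = 1) :
    -- the Schur complement inverse `S₁(λ)⁻¹`
    ∀ S₁inv : X₂ →L[ℂ] X₂,
      S₁inv = R₂ + R₂.comp ((B₂.comp (C₁.comp (R₁.comp B₁))).comp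
                (Dinv.comp (C₂.comp R₂))) →
    IsResolventOf (dom₁.prod dom₂)
      (LinearMap.prod
        (A₁.comp (LinearMap.fst ℂ X₁ X₂) +
          ((B₁.comp C₂ : X₂ →L[ℂ] X₁) : X₂ →ₗ[ℂ] X₁).comp (LinearMap.snd ℂ X₁ X₂))
        (A₂.comp (LinearMap.snd ℂ X₁ X₂) +
          ((B₂.comp C₁ : X₁ →L[ℂ] X₂) : X₁ →ₗ[ℂ] X₂).comp (LinearMap.fst ℂ X₁ X₂)))
      lam
      (ContinuousLinearMap.prod
        ((R₁ + R₁.comp ((B₁.comp C₂).comp (S₁inv.comp ((B₂.comp C₁).comp R₁)))).comp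
            (ContinuousLinearMap.fst ℂ X₁ X₂) +
          (R₁.comp ((B₁.comp C₂).comp S₁inv)).comp (ContinuousLinearMap.snd ℂ X₁ X₂))
        ((S₁inv.comp ((B₂.comp C₁).comp R₁)).comp (ContinuousLinearMap.fst ℂ X₁ X₂) +
          S₁inv.comp (ContinuousLinearMap.snd ℂ X₁ X₂))) := by
  obtain ⟨h1m, h1r, h1l⟩ := hR₁
  obtain ⟨h2m, h2r, h2l⟩ := hR₂
  intro S hS
  have hSapp : ∀ y : X₂, S y = R₂ y + R₂ (B₂ (C₁ (R₁ (B₁ (Dinv (C₂ (R₂ y))))))) := by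
    intro y; rw [hS]; simp
  have hD1 : ∀ z : Y₁, Dinv z = z + C₂ (R₂ (B₂ (C₁ (R₁ (B₁ (Dinv z)))))) := by
    intro z
    have h := DFunLike.congr_fun hDinv₁ z
    simp only [ContinuousLinearMap.mul_apply, ContinuousLinearMap.sub_apply,
      ContinuousLinearMap.one_apply, ContinuousLinearMap.coe_comp', Function.comp_apply] at h
    exact eq_add_of_sub_eq h
  have hD2 : ∀ z : Y₁, Dinv z - Dinv (C₂ (R₂ (B₂ (C₁ (R₁ (B₁ z)))))) = z := by
    intro z
    have h := DFunLike.congr_fun hDinv₂ z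
    simp only [ContinuousLinearMap.mul_apply, ContinuousLinearMap.sub_apply,
      ContinuousLinearMap.one_apply, ContinuousLinearMap.coe_comp', Function.comp_apply,
      map_sub] at h
    exact h
  have hCS : ∀ y : X₂, C₂ (S y) = Dinv (C₂ (R₂ y)) := by
    intro y
    rw [hSapp, map_add, ← hD1 (C₂ (R₂ y))]
  have hS2 : ∀ y : X₂, S y - S (B₂ (C₁ (R₁ (B₁ (C₂ (R₂ y)))))) = R₂ y := by
    intro y
    rw [hSapp, hSapp]
    have h := hD2 (C₂ (R₂ y))
    calc R₂ y + R₂ (B₂ (C₁ (R₁ (B₁ (Dinv (C₂ (R₂ y))))))) -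
          (R₂ (B₂ (C₁ (R₁ (B₁ (C₂ (R₂ y)))))) +
           R₂ (B₂ (C₁ (R₁ (B₁ (Dinv (C₂ (R₂ (B₂ (C₁ (R₁ (B₁ (C₂ (R₂ y))))))))))))))
        = R₂ y + (R₂ (B₂ (C₁ (R₁ (B₁ (Dinv (C₂ (R₂ y)) -
            Dinv (C₂ (R₂ (B₂ (C₁ (R₁ (B₁ (C₂ (R₂ y)))))))) - C₂ (R₂ y)))))) ) := by
          simp only [map_sub]; abel
      _ = R₂ y := by rw [h]; simp
  have hSr : ∀ y : X₂, lam • S y - A₂ (S y) = y + B₂ (C₁ (R₁ (B₁ (Dinv (C₂ (R₂ y)))))) := by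
    intro y
    rw [hSapp, map_add, smul_add]
    have h1 := h2r y
    have h2 := h2r (B₂ (C₁ (R₁ (B₁ (Dinv (C₂ (R₂ y)))))))
    linear_combination (norm := abel) h1 + h2
  have hSm : ∀ y : X₂, S y ∈ dom₂ := by
    intro y; rw [hSapp]; exact add_mem (h2m y) (h2m _)
  refine ⟨?_, ?_, ?_⟩
  · intro x
    simp only [ContinuousLinearMap.prod_apply, ContinuousLinearMap.add_apply,
      ContinuousLinearMap.coe_comp', Function.comp_apply, ContinuousLinearMap.coe_fst',
      ContinuousLinearMap.coe_snd', Submodule.mem_prod]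
    exact ⟨add_mem (add_mem (h1m x.1) (h1m _)) (h1m _), add_mem (hSm _) (hSm _)⟩
  · intro x
    simp only [ContinuousLinearMap.prod_apply, ContinuousLinearMap.add_apply,
      ContinuousLinearMap.coe_comp', Function.comp_apply, ContinuousLinearMap.coe_fst',
      ContinuousLinearMap.coe_snd', LinearMap.prod_apply, LinearMap.add_apply,
      LinearMap.coe_comp, LinearMap.fst_apply, LinearMap.snd_apply, Function.prod,
      ContinuousLinearMap.coe_coe, Prod.smul_mk, Prod.ext_iff, Prod.fst_sub, Prod.snd_sub]
    constructor
    · have e1 := h1r x.1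
      have e2 := h1r (B₁ (C₂ (S (B₂ (C₁ (R₁ x.1))))))
      have e3 := h1r (B₁ (C₂ (S x.2)))
      simp only [map_add, smul_add]
      linear_combination (norm := abel) e1 + e2 + e3
    · have e1 := hSr (B₂ (C₁ (R₁ x.1)))
      have e2 := hSr x.2
      have e3 : C₂ (S (B₂ (C₁ (R₁ x.1)))) = Dinv (C₂ (R₂ (B₂ (C₁ (R₁ x.1))))) := hCS _
      have e4 : C₂ (S x.2) = Dinv (C₂ (R₂ x.2)) := hCS _
      simp only [map_add, smul_add, e3, e4]
      linear_combination (norm := abel) e1 + e2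
  · rintro ⟨x₁, x₂⟩ hx
    rw [Submodule.mem_prod] at hx
    obtain ⟨hx1, hx2⟩ := hx
    have ha : R₁ (lam • x₁ - A₁ x₁) = x₁ := h1l x₁ hx1
    have hb : R₂ (lam • x₂ - A₂ x₂) = x₂ := h2l x₂ hx2
    set a : X₁ := lam • x₁ - A₁ x₁ with ha'
    set b : X₂ := lam • x₂ - A₂ x₂ with hb'
    simp only [ContinuousLinearMap.prod_apply, ContinuousLinearMap.add_apply,
      ContinuousLinearMap.coe_comp', Function.comp_apply, ContinuousLinearMap.coe_fst',
      ContinuousLinearMap.coe_snd', LinearMap.prod_apply, LinearMap.add_apply,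
      LinearMap.coe_comp, LinearMap.fst_apply, LinearMap.snd_apply, Function.prod,
      ContinuousLinearMap.coe_coe, Prod.smul_mk, Prod.fst_sub, Prod.snd_sub,
      sub_add_eq_sub_sub, Prod.ext_iff]
    rw [← ha', ← hb']
    have hR1u : R₁ (a - B₁ (C₂ x₂)) = x₁ - R₁ (B₁ (C₂ x₂)) := by
      rw [map_sub, ha]
    have key2 : S (B₂ (C₁ (R₁ (a - B₁ (C₂ x₂))))) + S (b - B₂ (C₁ x₁)) = x₂ := by
      have harg : B₂ (C₁ (R₁ (a - B₁ (C₂ x₂)))) + (b - B₂ (C₁ x₁))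
          = b - B₂ (C₁ (R₁ (B₁ (C₂ (R₂ b))))) := by
        rw [hR1u, hb]; simp only [map_sub]; abel
      rw [← map_add, harg, map_sub, hS2 b, hb]
    refine ⟨?_, key2⟩
    have hsum : R₁ (B₁ (C₂ (S (B₂ (C₁ (R₁ (a - B₁ (C₂ x₂)))))))) +
        R₁ (B₁ (C₂ (S (b - B₂ (C₁ x₁))))) = R₁ (B₁ (C₂ x₂)) := by
      rw [← map_add, ← map_add, ← map_add, key2]
    linear_combination (norm := abel) hR1u + hsum
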